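/- Let 𝓕 be a forest on S and T ∈ 𝓕 with M(𝓕, T) nonempty, and let π_{𝓕,T} : V_T → ⊕_{U ∈ M(𝓕,T)} V_U be the product of the restriction maps π_U^T. Then π_{𝓕,T} is surjective, its kernel has dimension m(𝓕, T), and for any family (M_U)_{U ∈ M(𝓕,T)} of one-dimensional subspaces M_U ≤ V_U, the preimage π_{𝓕,T}⁻¹(⊕_U M_U) has dimension n(𝓕, T). -/

import Mathlib

variable {α : Type*} [DecidableEq α]

/-- The set of elements of `L` that are maximal in `L` under `T`. -/
def maxUnder (L : Finset (Finset α)) (T : Finset α) : Finset (Finset α) :=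
  L.filter fun U => U ⊂ T ∧ ∀ V ∈ L, ¬ (U ⊂ V ∧ V ⊂ T)

/-- A forest on `S`. -/
def IsForest (S : Finset α) (F : Finset (Finset α)) : Prop :=
  (∀ T ∈ F, T ⊆ S) ∧ (∀ T ∈ F, 2 ≤ T.card) ∧
    ∀ U ∈ F, ∀ T ∈ F, U ⊆ T ∨ T ⊆ U ∨ U ∩ T = ∅

/-- `m(F, T) = (|T| - 1) - Σ_{U ∈ M(F,T)} (|U| - 1)`. -/
def mNum (F : Finset (Finset α)) (T : Finset α) : ℤ :=
  ((T.card : ℤ) - 1) - ∑ U ∈ maxUnder F T, ((U.card : ℤ) - 1)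

/-- `n(F, T) = (|T| - 1) - Σ_{U ∈ M(F,T)} (|U| - 2)`. -/
def nNum (F : Finset (Finset α)) (T : Finset α) : ℤ :=
  ((T.card : ℤ) - 1) - ∑ U ∈ maxUnder F T, ((U.card : ℤ) - 2)

noncomputable section

/-- The subspace of constant functions in `F(T, ℂ) = (T → ℂ)`. -/
def constSub (T : Finset α) : Submodule ℂ (↥T → ℂ) :=
  Submodule.span ℂ {fun _ => 1}

/-- `V_T = F(T, ℂ)/C_T`. -/
abbrev Vspace (T : Finset α) : Type _ := (↥T → ℂ) ⧸ constSub T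

/-- Restriction of functions, as a linear map `F(T,ℂ) → F(U,ℂ)` for `U ⊆ T`. -/
def restr (U T : Finset α) (h : U ⊆ T) : (↥T → ℂ) →ₗ[ℂ] (↥U → ℂ) :=
  LinearMap.funLeft ℂ ℂ (fun u => ⟨u.1, h u.2⟩)

/-- The induced map `π_U^T : V_T → V_U`. -/
def piUT (U T : Finset α) (h : U ⊆ T) : Vspace T →ₗ[ℂ] Vspace U :=
  Submodule.mapQ (constSub T) (constSub U) (restr U T h) (by
    rw [constSub, Submodule.span_le, Set.singleton_subset_iff, SetLike.mem_coe,
      Submodule.mem_comap]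
    exact Submodule.subset_span rfl)

/-- The map `π_{F,T} : V_T → ⊕_{U ∈ M(F,T)} V_U`, the product of the restriction
maps `π_U^T`. -/
def piForest (F : Finset (Finset α)) (T : Finset α) :
    Vspace T →ₗ[ℂ] ((U : ↥(maxUnder F T)) → Vspace U.1) :=
  LinearMap.pi fun U => piUT U.1 T (Finset.mem_filter.mp U.2).2.1.subset

section Aux

def submodulePiEquiv {R : Type*} [Semiring R] {ι : Type*} {M : ι → Type*}
    [∀ i, AddCommMonoid (M i)] [∀ i, Module R (M i)] (p : ∀ i, Submodule R (M i)) :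
    ↥(Submodule.pi Set.univ p) ≃ₗ[R] ((i : ι) → ↥(p i)) where
  toFun x := fun i => ⟨x.1 i, x.2 i (Set.mem_univ i)⟩
  invFun x := ⟨fun i => (x i).1, fun i _ => (x i).2⟩
  map_add' _ _ := rfl
  map_smul' _ _ := rfl
  left_inv _ := rfl
  right_inv _ := rfl

lemma finrank_comap_of_surjective {A B : Type*} [AddCommGroup A] [Module ℂ A]
    [AddCommGroup B] [Module ℂ B] [FiniteDimensional ℂ A] (f : A →ₗ[ℂ] B)
    (hf : Function.Surjective f) (W : Submodule ℂ B) :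
    Module.finrank ℂ ↥(Submodule.comap f W) =
      Module.finrank ℂ ↥W + Module.finrank ℂ ↥(LinearMap.ker f) := by
  have hmap : ∀ x ∈ Submodule.comap f W, f x ∈ W := fun x hx => hx
  set g := f.restrict hmap with hg
  have hker : LinearMap.ker f ≤ Submodule.comap f W := fun x hx => by
    simp only [Submodule.mem_comap, LinearMap.mem_ker.mp hx]; exact W.zero_mem
  have hrange : LinearMap.range g = ⊤ := by
    rw [LinearMap.range_eq_top]
    rintro ⟨w, hw⟩
    obtain ⟨x, hx⟩ := hf w
    exact ⟨⟨x, show f x ∈ W by rw [hx]; exact hw⟩, Subtype.ext hx⟩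
  have hB : FiniteDimensional ℂ B := Module.Finite.of_surjective f hf
  have h1 := LinearMap.finrank_range_add_finrank_ker g
  rw [hrange, finrank_top, LinearMap.ker_restrict] at h1
  rw [← h1, (Submodule.comapSubtypeEquivOfLe hker).finrank_eq]

lemma finrank_Vspace_add_one (T : Finset α) (hT : T.Nonempty) :
    Module.finrank ℂ (Vspace T) + 1 = T.card := by
  have h1 : Module.finrank ℂ ↥(constSub T) = 1 := by
    rw [constSub, finrank_span_singleton]
    intro h
    have := congrFun h ⟨hT.choose, hT.choose_spec⟩
    simpa using this
  have h2 := Submodule.finrank_quotient_add_finrank (constSub T)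
  rw [h1] at h2
  rw [h2, Module.finrank_pi, Fintype.card_coe]

lemma maxUnder_disjoint {S : Finset α} {F : Finset (Finset α)} (hF : IsForest S F)
    {T U V : Finset α} (hU : U ∈ maxUnder F T) (hV : V ∈ maxUnder F T) (hUV : U ≠ V)
    {x : α} (hxU : x ∈ U) (hxV : x ∈ V) : False := by
  obtain ⟨hUF, hUT, hUmax⟩ := Finset.mem_filter.mp hU
  obtain ⟨hVF, hVT, hVmax⟩ := Finset.mem_filter.mp hV
  rcases hF.2.2 U hUF V hVF with h | h | h
  · exact hUmax V hVF ⟨lt_of_le_of_ne h hUV, hVT⟩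
  · exact hVmax U hUF ⟨lt_of_le_of_ne h (Ne.symm hUV), hUT⟩
  · exact absurd (h ▸ Finset.mem_inter.mpr ⟨hxU, hxV⟩) (Finset.notMem_empty x)

lemma piForest_surjective {S : Finset α} {F : Finset (Finset α)} (hF : IsForest S F)
    (T : Finset α) : Function.Surjective (piForest F T) := by
  intro y
  choose g hg using fun U => Submodule.Quotient.mk_surjective _ (y U)
  classical
  set f : ↥T → ℂ := fun t =>
    ∑ U : ↥(maxUnder F T), if h : t.1 ∈ U.1 then g U ⟨t.1, h⟩ else 0 with hf
  refine ⟨Submodule.Quotient.mk f, ?_⟩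
  funext U
  show piUT U.1 T _ (Submodule.Quotient.mk f) = y U
  rw [piUT, Submodule.mapQ_apply, ← hg U]
  congr 1
  funext u
  show f ⟨u.1, _⟩ = g U u
  rw [hf]
  beta_reduce
  rw [Finset.sum_eq_single U]
  · rw [dif_pos u.2]
  · intro V _ hVU
    rw [dif_neg]
    intro hx
    exact maxUnder_disjoint hF V.2 U.2 (fun h => hVU (Subtype.ext h)) hx u.2
  · intro h; exact absurd (Finset.mem_univ U) h

end Aux

/-- Lemma 4.1.5: for a forest `F` and `T ∈ F` with `M(F,T)` nonempty, the map
`π_{F,T}` is surjective, its kernel has dimension `m(F,T)`, and the preimage of a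
direct sum of lines `⊕ M_U` has dimension `n(F,T)`. -/
theorem stmt6 (S : Finset α) (F : Finset (Finset α)) (hF : IsForest S F)
    (T : Finset α) (hT : T ∈ F) (hne : (maxUnder F T).Nonempty)
    (M : (U : ↥(maxUnder F T)) → Submodule ℂ (Vspace U.1))
    (hM : ∀ U, Module.finrank ℂ ↥(M U) = 1) :
    Function.Surjective (piForest F T) ∧
    (Module.finrank ℂ ↥(LinearMap.ker (piForest F T)) : ℤ) = mNum F T ∧
    (Module.finrank ℂ
        ↥(Submodule.comap (piForest F T) (Submodule.pi Set.univ M)) : ℤ)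
      = nNum F T := by
  have hsurj := piForest_surjective hF T
  -- dimension of Vspace T
  have hTcard : 2 ≤ T.card := hF.2.1 T hT
  have hTne : T.Nonempty := Finset.card_pos.mp (by omega)
  have hdimT := finrank_Vspace_add_one T hTne
  -- dimensions of the Vspace U
  have hdimU : ∀ U : ↥(maxUnder F T),
      Module.finrank ℂ (Vspace U.1) + 1 = U.1.card := fun U => by
    have hUF : U.1 ∈ F := (Finset.mem_filter.mp U.2).1
    have : 2 ≤ U.1.card := hF.2.1 U.1 hUF
    exact finrank_Vspace_add_one U.1 (Finset.card_pos.mp (by omega))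
  -- rank-nullity
  have h1 := LinearMap.finrank_range_add_finrank_ker (piForest F T)
  rw [LinearMap.range_eq_top.mpr hsurj, finrank_top, Module.finrank_pi_fintype] at h1
  -- kernel dimension
  have hker : (Module.finrank ℂ ↥(LinearMap.ker (piForest F T)) : ℤ) = mNum F T := by
    have hsum : ((∑ U : ↥(maxUnder F T), Module.finrank ℂ (Vspace U.1) : ℕ) : ℤ)
        = ∑ U ∈ maxUnder F T, ((U.card : ℤ) - 1) := by
      push_cast
      rw [← Finset.sum_coe_sort (maxUnder F T) (fun U => ((U.card : ℤ) - 1))]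
      exact Finset.sum_congr rfl fun U _ => by
        have := hdimU U; push_cast at this ⊢; omega
    rw [mNum, ← hsum]
    omega
  refine ⟨hsurj, hker, ?_⟩
  -- preimage dimension
  have h2 := finrank_comap_of_surjective (piForest F T) hsurj (Submodule.pi Set.univ M)
  have h3 : Module.finrank ℂ ↥(Submodule.pi Set.univ M) = (maxUnder F T).card := by
    haveI : ∀ i, Module.Free ℂ ↥(M i) := fun i => Module.Free.of_divisionRing ℂ _
    rw [(submodulePiEquiv M).finrank_eq, Module.finrank_pi_fintype]
    simp [hM, Fintype.card_coe]
  rw [h2, h3]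
  have hcard : ((maxUnder F T).card : ℤ) + mNum F T = nNum F T := by
    rw [mNum, nNum, Finset.sum_sub_distrib, Finset.sum_sub_distrib]
    simp [Finset.sum_const]
    ring
  push_cast
  omega

end
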